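/- Let Δ and Γ be simplicial complexes on the same finite vertex set V, with f-polynomials f_Δ(q) = Σ_{i≥0} f_{i−1}(Δ) q^i, where f_{i−1}(Δ) is the number of faces of Δ with i vertices (including the empty face for i = 0). Then f_Δ(q) · f_Γ(q) ≪ (1+q)^{|V|} · f_{Δ∩Γ}(q), i.e., every coefficient of (1+q)^{|V|} f_{Δ∩Γ}(q) − f_Δ(q) f_Γ(q) is nonnegative. -/

import Mathlib

open Polynomial

namespace Stmt3Aux

variable {V : Type*} [DecidableEq V]

/-- The f-polynomial of a finite family of finite sets. -/
noncomputable def fP (S : Finset (Finset V)) : Polynomial ℕ :=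
  ∑ F ∈ S, (X : Polynomial ℕ) ^ F.card

/-- Coefficientwise order. -/
def PLe (p q : Polynomial ℕ) : Prop := ∀ d : ℕ, p.coeff d ≤ q.coeff d

lemma PLe.refl (p : Polynomial ℕ) : PLe p p := fun _ => le_rfl

lemma PLe.add {p q r s : Polynomial ℕ} (h₁ : PLe p r) (h₂ : PLe q s) :
    PLe (p + q) (r + s) := by
  intro d
  simp only [coeff_add]
  exact Nat.add_le_add (h₁ d) (h₂ d)

lemma PLe.mul {p q r s : Polynomial ℕ} (h₁ : PLe p r) (h₂ : PLe q s) :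
    PLe (p * q) (r * s) := by
  intro d
  rw [coeff_mul, coeff_mul]
  exact Finset.sum_le_sum fun x _ => Nat.mul_le_mul (h₁ x.1) (h₂ x.2)

lemma fP_mono {S T : Finset (Finset V)} (h : S ⊆ T) : PLe (fP S) (fP T) := by
  intro d
  simp only [fP, finset_sum_coeff]
  exact Finset.sum_le_sum_of_subset_of_nonneg h (fun _ _ _ => Nat.zero_le _)

lemma fP_add_fP (S T : Finset (Finset V)) :
    fP (S ∪ T) + fP (S ∩ T) = fP S + fP T := by
  simp only [fP]
  exact Finset.sum_union_inter

/-- Deletion of a vertex. -/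
def del (v : V) (S : Finset (Finset V)) : Finset (Finset V) :=
  S.filter (fun s => v ∉ s)

/-- Link of a vertex. -/
def lk (v : V) (S : Finset (Finset V)) : Finset (Finset V) :=
  (S.filter (fun s => v ∈ s)).image (fun s => s.erase v)

lemma mem_del {v : V} {S : Finset (Finset V)} {s : Finset V} :
    s ∈ del v S ↔ s ∈ S ∧ v ∉ s := Finset.mem_filter

lemma mem_lk {v : V} {S : Finset (Finset V)} {s : Finset V}
    (hs : v ∉ s) : s ∈ lk v S ↔ insert v s ∈ S := by
  constructor
  · rintro h
    rcases Finset.mem_image.1 h with ⟨t, ht, rfl⟩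
    rcases Finset.mem_filter.1 ht with ⟨htS, hvt⟩
    rwa [Finset.insert_erase hvt]
  · intro h
    exact Finset.mem_image.2 ⟨insert v s, Finset.mem_filter.2 ⟨h, Finset.mem_insert_self v s⟩,
      by rw [Finset.erase_insert hs]⟩

lemma fP_split (v : V) (S : Finset (Finset V)) :
    fP S = fP (del v S) + X * fP (lk v S) := by
  have hsplit : fP S = (∑ F ∈ S.filter (fun s => v ∉ s), (X : Polynomial ℕ) ^ F.card)
      + ∑ F ∈ S.filter (fun s => v ∈ s), (X : Polynomial ℕ) ^ F.card := by
    rw [fP, ← Finset.sum_filter_add_sum_filter_not S (fun s => v ∈ s)]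
    ring
  rw [hsplit]
  congr 1
  rw [fP, lk, Finset.sum_image, Finset.mul_sum]
  · apply Finset.sum_congr rfl
    intro F hF
    have hvF : v ∈ F := (Finset.mem_filter.1 hF).2
    have hc : F.card = (F.erase v).card + 1 := by
      rw [Finset.card_erase_of_mem hvF]
      exact (Nat.succ_pred_eq_of_pos (Finset.card_pos.2 ⟨v, hvF⟩)).symm
    rw [hc, pow_succ]
    ring
  · intro a ha b hb hab
    have hva : v ∈ a := (Finset.mem_filter.1 ha).2
    have hvb : v ∈ b := (Finset.mem_filter.1 hb).2
    rw [← Finset.insert_erase hva, ← Finset.insert_erase hvb, show a.erase v = b.erase v from hab]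

lemma del_inter (v : V) (S T : Finset (Finset V)) :
    del v (S ∩ T) = del v S ∩ del v T := by
  ext s
  simp only [mem_del, Finset.mem_inter]
  tauto

lemma lk_subset_union {v : V} {S : Finset (Finset V)} {s : Finset V} (hs : s ∈ lk v S) :
    v ∉ s := by
  rcases Finset.mem_image.1 hs with ⟨t, _, rfl⟩
  exact Finset.notMem_erase v t

lemma lk_inter (v : V) (S T : Finset (Finset V)) :
    lk v (S ∩ T) = lk v S ∩ lk v T := by
  ext s
  by_cases hvs : v ∈ s
  · constructor
    · intro h; exact absurd hvs (lk_subset_union h)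
    · intro h; exact absurd hvs (lk_subset_union (Finset.mem_inter.1 h).1)
  · simp only [Finset.mem_inter, mem_lk hvs]

lemma lk_subset_del (v : V) (S : Finset (Finset V))
    (hdown : ∀ s ∈ S, ∀ t ⊆ s, t ∈ S) : lk v S ⊆ del v S := by
  intro s hs
  have hvs : v ∉ s := lk_subset_union hs
  have h : insert v s ∈ S := (mem_lk hvs).1 hs
  exact mem_del.2 ⟨hdown _ h s (Finset.subset_insert v s), hvs⟩

lemma del_down (v : V) (S : Finset (Finset V))
    (hdown : ∀ s ∈ S, ∀ t ⊆ s, t ∈ S) :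
    ∀ s ∈ del v S, ∀ t ⊆ s, t ∈ del v S := by
  intro s hs t hts
  rcases mem_del.1 hs with ⟨hsS, hvs⟩
  exact mem_del.2 ⟨hdown s hsS t hts, fun hvt => hvs (hts hvt)⟩

lemma lk_down (v : V) (S : Finset (Finset V))
    (hdown : ∀ s ∈ S, ∀ t ⊆ s, t ∈ S) :
    ∀ s ∈ lk v S, ∀ t ⊆ s, t ∈ lk v S := by
  intro s hs t hts
  have hvs : v ∉ s := lk_subset_union hs
  have hvt : v ∉ t := fun h => hvs (hts h)
  have h : insert v s ∈ S := (mem_lk hvs).1 hs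
  exact (mem_lk hvt).2 (hdown _ h _ (Finset.insert_subset_insert v hts))

/-- Main auxiliary lemma, by induction on the ambient vertex set `U`. -/
lemma main (U : Finset V) :
    ∀ (Δ Γ : Finset (Finset V)),
      (∀ s ∈ Δ, s ⊆ U) → (∀ s ∈ Γ, s ⊆ U) →
      (∀ s ∈ Δ, ∀ t ⊆ s, t ∈ Δ) → (∀ s ∈ Γ, ∀ t ⊆ s, t ∈ Γ) →
      PLe (fP Δ * fP Γ) ((1 + X) ^ U.card * fP (Δ ∩ Γ)) := by
  induction U using Finset.induction_on with
  | empty =>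
    intro Δ Γ hΔU hΓU _ _
    have hΔ : Δ ⊆ {∅} := by
      intro s hs
      rw [Finset.mem_singleton]
      exact Finset.subset_empty.1 (hΔU s hs)
    have hΓ : Γ ⊆ {∅} := by
      intro s hs
      rw [Finset.mem_singleton]
      exact Finset.subset_empty.1 (hΓU s hs)
    rcases Finset.subset_singleton_iff.1 hΔ with rfl | rfl
    · simp only [fP, Finset.sum_empty, zero_mul]
      intro d; simp
    rcases Finset.subset_singleton_iff.1 hΓ with rfl | rfl
    · simp only [fP, Finset.inter_empty, Finset.sum_empty, mul_zero]
      intro d; simp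
    · simp only [fP, Finset.inter_self, Finset.sum_singleton, Finset.card_empty, pow_zero,
        Finset.card_empty, mul_one, one_mul]
      exact PLe.refl _
  | insert v U hvU ih =>
    intro Δ Γ hΔU hΓU hΔd hΓd
    -- abbreviations
    set a := fP (del v Δ) with ha
    set b := fP (lk v Δ) with hb
    set c := fP (del v Γ) with hc
    set e := fP (lk v Γ) with he
    set P : Polynomial ℕ := (1 + X) ^ U.card with hP
    -- face bounds for deletions and links
    have hdelU : ∀ (S : Finset (Finset V)), (∀ s ∈ S, s ⊆ insert v U) →
        ∀ s ∈ del v S, s ⊆ U := by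
      intro S hS s hs
      rcases mem_del.1 hs with ⟨hsS, hvs⟩
      intro x hx
      rcases Finset.mem_insert.1 (hS s hsS hx) with rfl | h
      · exact absurd hx hvs
      · exact h
    have hlkU : ∀ (S : Finset (Finset V)), (∀ s ∈ S, s ⊆ insert v U) →
        ∀ s ∈ lk v S, s ⊆ U := by
      intro S hS s hs
      have hvs : v ∉ s := lk_subset_union hs
      have h : insert v s ∈ S := (mem_lk hvs).1 hs
      intro x hx
      rcases Finset.mem_insert.1 (hS _ h (Finset.mem_insert_of_mem hx)) with rfl | h'
      · exact absurd hx hvs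
      · exact h'
    -- the four IH instances
    have h1 : PLe (a * c) (P * fP (del v Δ ∩ del v Γ)) :=
      ih _ _ (hdelU Δ hΔU) (hdelU Γ hΓU) (del_down v Δ hΔd) (del_down v Γ hΓd)
    have h2 : PLe (b * e) (P * fP (lk v Δ ∩ lk v Γ)) :=
      ih _ _ (hlkU Δ hΔU) (hlkU Γ hΓU) (lk_down v Δ hΔd) (lk_down v Γ hΓd)
    have h3 : PLe (a * e) (P * fP (del v Δ ∩ lk v Γ)) :=
      ih _ _ (hdelU Δ hΔU) (hlkU Γ hΓU) (del_down v Δ hΔd) (lk_down v Γ hΓd)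
    have h4 : PLe (b * c) (P * fP (lk v Δ ∩ del v Γ)) :=
      ih _ _ (hlkU Δ hΔU) (hdelU Γ hΓU) (lk_down v Δ hΔd) (del_down v Γ hΓd)
    -- cross-term estimate
    have hcross : PLe (fP (del v Δ ∩ lk v Γ) + fP (lk v Δ ∩ del v Γ))
        (fP (del v Δ ∩ del v Γ) + fP (lk v Δ ∩ lk v Γ)) := by
      have hlΔ := lk_subset_del v Δ hΔd
      have hlΓ := lk_subset_del v Γ hΓd
      have hsub : (del v Δ ∩ lk v Γ) ∪ (lk v Δ ∩ del v Γ) ⊆ del v Δ ∩ del v Γ := by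
        intro s hs
        rcases Finset.mem_union.1 hs with h | h
        · rcases Finset.mem_inter.1 h with ⟨h₁, h₂⟩
          exact Finset.mem_inter.2 ⟨h₁, hlΓ h₂⟩
        · rcases Finset.mem_inter.1 h with ⟨h₁, h₂⟩
          exact Finset.mem_inter.2 ⟨hlΔ h₁, h₂⟩
      have hinter : (del v Δ ∩ lk v Γ) ∩ (lk v Δ ∩ del v Γ) = lk v Δ ∩ lk v Γ := by
        apply Finset.Subset.antisymm
        · intro s hs
          rcases Finset.mem_inter.1 hs with ⟨h₁, h₂⟩
          exact Finset.mem_inter.2 ⟨(Finset.mem_inter.1 h₂).1, (Finset.mem_inter.1 h₁).2⟩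
        · intro s hs
          rcases Finset.mem_inter.1 hs with ⟨h₁, h₂⟩
          exact Finset.mem_inter.2 ⟨Finset.mem_inter.2 ⟨hlΔ h₁, h₂⟩,
            Finset.mem_inter.2 ⟨h₁, hlΓ h₂⟩⟩
      have heq : fP (del v Δ ∩ lk v Γ) + fP (lk v Δ ∩ del v Γ)
          = fP ((del v Δ ∩ lk v Γ) ∪ (lk v Δ ∩ del v Γ)) + fP (lk v Δ ∩ lk v Γ) := by
        rw [← fP_add_fP, hinter]
      rw [heq]
      exact PLe.add (fP_mono hsub) (PLe.refl _)
    -- decompose LHS and RHS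
    have hΔsplit : fP Δ = a + X * b := fP_split v Δ
    have hΓsplit : fP Γ = c + X * e := fP_split v Γ
    have hIsplit : fP (Δ ∩ Γ) = fP (del v Δ ∩ del v Γ) + X * fP (lk v Δ ∩ lk v Γ) := by
      rw [← del_inter, ← lk_inter]
      exact fP_split v (Δ ∩ Γ)
    have hcard : (insert v U).card = U.card + 1 := Finset.card_insert_of_notMem hvU
    rw [hΔsplit, hΓsplit, hIsplit, hcard]
    have hexp : (a + X * b) * (c + X * e)
        = a * c + X * (a * e + b * c) + X * X * (b * e) := by ring
    have hexp2 : (1 + X) ^ (U.card + 1)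
          * (fP (del v Δ ∩ del v Γ) + X * fP (lk v Δ ∩ lk v Γ))
        = P * fP (del v Δ ∩ del v Γ)
          + X * (P * (fP (del v Δ ∩ del v Γ) + fP (lk v Δ ∩ lk v Γ)))
          + X * X * (P * fP (lk v Δ ∩ lk v Γ)) := by
      rw [pow_succ, hP]; ring
    rw [hexp, hexp2]
    apply PLe.add
    apply PLe.add
    · exact h1
    · apply PLe.mul (PLe.refl X)
      intro d
      calc (a * e + b * c).coeff d
          ≤ (P * fP (del v Δ ∩ lk v Γ) + P * fP (lk v Δ ∩ del v Γ)).coeff d :=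
            (PLe.add h3 h4) d
        _ = (P * (fP (del v Δ ∩ lk v Γ) + fP (lk v Δ ∩ del v Γ))).coeff d := by
            rw [mul_add]
        _ ≤ (P * (fP (del v Δ ∩ del v Γ) + fP (lk v Δ ∩ lk v Γ))).coeff d :=
            (PLe.mul (PLe.refl P) hcross) d
    · exact PLe.mul (PLe.refl (X * X)) h2

end Stmt3Aux

/-- For simplicial complexes `Δ, Γ` on the same finite vertex set `V`,
`f_Δ(q)·f_Γ(q) ≪ (1+q)^{|V|}·f_{Δ∩Γ}(q)` coefficientwise. -/
theorem stmt_3 {V : Type*} [Fintype V] [DecidableEq V]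
    (Δ Γ : Finset (Finset V))
    (hΔdown : ∀ s ∈ Δ, ∀ t ⊆ s, t ∈ Δ)
    (hΓdown : ∀ s ∈ Γ, ∀ t ⊆ s, t ∈ Γ)
    (hΔe : (∅ : Finset V) ∈ Δ) (hΓe : (∅ : Finset V) ∈ Γ) :
    ∀ d : ℕ,
      ((∑ F ∈ Δ, (X : Polynomial ℕ) ^ F.card) * (∑ F ∈ Γ, X ^ F.card)).coeff d ≤
      ((1 + X) ^ Fintype.card V * ∑ F ∈ Δ ∩ Γ, X ^ F.card).coeff d := by
  have h := Stmt3Aux.main (Finset.univ : Finset V) Δ Γ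
    (fun s _ => Finset.subset_univ s) (fun s _ => Finset.subset_univ s) hΔdown hΓdown
  rw [Finset.card_univ] at h
  exact h
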